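/- Let G be a graph, I ⊆ V(G) an independent set, and consider the two-component unweighted graph G' built from G: component A is a path a_1–a_2–a_3–a_4 where a_1 has n pendant leaves and a_4 has n pendant leaves; component B is obtained from G by subdividing every edge once, attaching n − deg_G(v) pendant leaves to every vertex v, and adding a universal-to-V vertex b with λ = Θ(n³) additional pendant leaves. If |I| ≥ k, then the competitive diffusion game with k+3 players on G' (all weights 1) has a pure Nash equilibrium: k players on k distinct vertices of I, one on b, and two on a_2 and a_3. -/

import Mathlib

open Classical

noncomputable section

/-- State labels in the competitive diffusion game:
`none` = free (undominated, non-neutral), `some none` = neutral,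
`some (some i)` = dominated by player `i`. -/
def initLabel {V : Type*} {k : ℕ} (s : Fin k → V) (v : V) : Option (Option (Fin k)) :=
  if h : ∃! i, s i = v then some (some h.choose)
  else if _h : (∃ i, s i = v) then some none
  else none

/-- One diffusion step: a free vertex adjacent to vertices dominated by exactly one
player becomes dominated by that player; if adjacent to vertices dominated by two or
more players it becomes neutral. -/
def stepLabel {V : Type*} {k : ℕ} (G : SimpleGraph V) (L : V → Option (Option (Fin k)))
    (v : V) : Option (Option (Fin k)) :=
  match L v with
  | some x => some x
  | none =>
    if h : ∃! i : Fin k, ∃ u, G.Adj u v ∧ L u = some (some i) then some (some h.choose)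
    else if _h : (∃ i : Fin k, ∃ u, G.Adj u v ∧ L u = some (some i)) then some none
    else none

/-- The final state of the diffusion process (it stabilizes after `|V|` steps). -/
def finalLabel {V : Type*} [Fintype V] {k : ℕ} (G : SimpleGraph V) (s : Fin k → V) :
    V → Option (Option (Fin k)) :=
  (fun L v => stepLabel G L v)^[Fintype.card V] (initLabel s)

/-- The utility of player `i`: total weight of the vertices `i` dominates at the end. -/
def utility {V : Type*} [Fintype V] {k : ℕ} (G : SimpleGraph V) (w : V → ℤ)
    (s : Fin k → V) (i : Fin k) : ℤ :=
  ∑ v ∈ Finset.univ.filter (fun v => finalLabel G s v = some (some i)), w v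

/-- `s` is a pure Nash equilibrium of the competitive diffusion game `(k, G, w)`. -/
def isNash {V : Type*} [Fintype V] [DecidableEq V] {k : ℕ} (G : SimpleGraph V) (w : V → ℤ)
    (s : Fin k → V) : Prop :=
  ∀ (i : Fin k) (v' : V), utility G w (Function.update s i v') i ≤ utility G w s i

/-- `G` with weights `w` admits `κ` players with boundary `t`: some pure Nash
equilibrium `s` of `(κ, G, w)` satisfies `ν(s) ≤ t ≤ μ(s)`. -/
def admitsWith {V : Type*} [Fintype V] [DecidableEq V] (G : SimpleGraph V) (w : V → ℤ)
    (κ : ℕ) (t : ℤ) : Prop :=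
  ∃ s : Fin κ → V, isNash G w s ∧
    (∀ v : V, utility G w (Fin.snoc s v) (Fin.last κ) ≤ t) ∧
    (∀ i : Fin κ, t ≤ utility G w s i)

/-- The path on `n` vertices. -/
def pathGraph (n : ℕ) : SimpleGraph (Fin n) :=
  SimpleGraph.fromRel (fun i j => (i : ℕ) + 1 = (j : ℕ))

/-- The unweighted path on `n` vertices admits `κ` players with boundary `t`. -/
def pathAdmits (n κ t : ℕ) : Prop :=
  admitsWith (pathGraph n) (fun _ => (1 : ℤ)) κ (t : ℤ)

/-- Vertices of the unweighted graph `G'` built from `G` on `Fin n`: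
component `A` = the 4-path plus `n` pendant leaves on `a_1` and `n` on `a_4`;
component `B` = the original vertices, one subdivision vertex per edge of `G`,
`n − deg(v)` pendant leaves on each vertex `v`, the vertex `b`, and `n³` pendant
leaves on `b`. -/
abbrev VGp (n : ℕ) (G : SimpleGraph (Fin n)) [DecidableRel G.Adj] :=
  (Fin 4 ⊕ (Fin n ⊕ Fin n)) ⊕
    (Fin n ⊕ (G.edgeSet ⊕ ((Σ v : Fin n, Fin (n - G.degree v)) ⊕ (Unit ⊕ Fin (n ^ 3)))))

/-- Generating relation for `G'`. -/
def relGp (n : ℕ) (G : SimpleGraph (Fin n)) [DecidableRel G.Adj] :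
    VGp n G → VGp n G → Prop := fun x y =>
  match x, y with
  -- the path a₁a₂a₃a₄:
  | Sum.inl (Sum.inl i), Sum.inl (Sum.inl i') => (i : ℕ) + 1 = (i' : ℕ)
  -- n pendant leaves on a₁:
  | Sum.inl (Sum.inl i), Sum.inl (Sum.inr (Sum.inl _)) => (i : ℕ) = 0
  -- n pendant leaves on a₄:
  | Sum.inl (Sum.inl i), Sum.inl (Sum.inr (Sum.inr _)) => (i : ℕ) = 3
  -- each edge e of G is subdivided by the vertex b_e:
  | Sum.inr (Sum.inl v), Sum.inr (Sum.inr (Sum.inl e)) => v ∈ (e : Sym2 (Fin n))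
  -- n − deg(v) pendant leaves on each v ∈ V:
  | Sum.inr (Sum.inl v), Sum.inr (Sum.inr (Sum.inr (Sum.inl ⟨v', _⟩))) => v = v'
  -- b is adjacent to every v ∈ V:
  | Sum.inr (Sum.inl _), Sum.inr (Sum.inr (Sum.inr (Sum.inr (Sum.inl _)))) => True
  -- n³ pendant leaves on b:
  | Sum.inr (Sum.inr (Sum.inr (Sum.inr (Sum.inl _)))),
      Sum.inr (Sum.inr (Sum.inr (Sum.inr (Sum.inr _)))) => True
  | _, _ => False

/-- The unweighted graph `G'` of the W[1]-hardness construction. -/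
def Gp (n : ℕ) (G : SimpleGraph (Fin n)) [DecidableRel G.Adj] : SimpleGraph (VGp n G) :=
  SimpleGraph.fromRel (relGp n G)

/-- The standard profile on `G'`: the first `k` players on the original vertices
`f 0, …, f (k−1)`, one player on `b`, and two players on `a_2` and `a_3`. -/
def profGp (n : ℕ) (G : SimpleGraph (Fin n)) [DecidableRel G.Adj] (k : ℕ)
    (f : Fin k → Fin n) : Fin (k + 3) → VGp n G := fun i =>
  if h : (i : ℕ) < k then Sum.inr (Sum.inl (f ⟨i, h⟩))
  else if (i : ℕ) = k then Sum.inr (Sum.inr (Sum.inr (Sum.inr (Sum.inl ()))))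
  else if (i : ℕ) = k + 1 then Sum.inl (Sum.inl (1 : Fin 4))
  else Sum.inl (Sum.inl (2 : Fin 4))

section Generic

variable {V : Type*} {k : ℕ} (G : SimpleGraph V) (s : Fin k → V)

lemma initLabel_of_unique {j : Fin k} {v : V} (hj : s j = v)
    (hu : ∀ j', s j' = v → j' = j) : initLabel s v = some (some j) := by
  have h : ∃! i, s i = v := ⟨j, hj, hu⟩
  rw [initLabel, dif_pos h]
  exact congrArg _ (congrArg _ (hu _ h.choose_spec.1))

lemma initLabel_of_not_mem {v : V} (h : ∀ j, s j ≠ v) : initLabel s v = none := by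
  rw [initLabel, dif_neg, dif_neg]
  · rintro ⟨j, hj⟩; exact h j hj
  · rintro ⟨j, hj, -⟩; exact h j hj

lemma initLabel_player {v : V} {j : Fin k} (h : initLabel s v = some (some j)) :
    s j = v := by
  by_cases h1 : ∃! i, s i = v
  · rw [initLabel, dif_pos h1] at h
    have hc : h1.choose = j := Option.some_injective _ (Option.some_injective _ h)
    exact hc ▸ h1.choose_spec.1
  · rw [initLabel, dif_neg h1] at h
    split at h <;> simp_all

lemma stepLabel_of_some {L : V → Option (Option (Fin k))} {v : V} {x : Option (Fin k)}
    (h : L v = some x) : stepLabel G L v = some x := by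
  rw [stepLabel, h]

lemma iterate_of_some {L : V → Option (Option (Fin k))} {v : V} {x : Option (Fin k)}
    (h : L v = some x) (m : ℕ) :
    (fun L v => stepLabel G L v)^[m] L v = some x := by
  induction m generalizing L with
  | zero => exact h
  | succ m ih =>
    rw [Function.iterate_succ_apply]
    exact ih (stepLabel_of_some G h)

lemma stepLabel_unique {L : V → Option (Option (Fin k))} {v : V} {i : Fin k}
    (h0 : L v = none) {u : V} (hu : G.Adj u v) (hLu : L u = some (some i))
    (huniq : ∀ (j : Fin k) (u' : V), G.Adj u' v → L u' = some (some j) → j = i) :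
    stepLabel G L v = some (some i) := by
  have h : ∃! j : Fin k, ∃ u, G.Adj u v ∧ L u = some (some j) :=
    ⟨i, ⟨u, hu, hLu⟩, fun j hj => hj.elim (fun u' hu' => huniq j u' hu'.1 hu'.2)⟩
  rw [stepLabel, h0]
  simp only [dif_pos h]
  obtain ⟨u', hu', hLu'⟩ := h.choose_spec.1
  exact congrArg _ (congrArg _ (huniq _ u' hu' hLu'))

lemma stepLabel_witness_ne {L : V → Option (Option (Fin k))} {v : V} {i j : Fin k}
    (h0 : L v = none) {u : V} (hu : G.Adj u v) (hLu : L u = some (some j))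
    (hji : j ≠ i) : stepLabel G L v ≠ none ∧ stepLabel G L v ≠ some (some i) := by
  rw [stepLabel, h0]
  by_cases h : ∃! j : Fin k, ∃ u, G.Adj u v ∧ L u = some (some j)
  · simp only [dif_pos h]
    have : h.choose = j := h.choose_spec.2 j ⟨u, hu, hLu⟩ ▸ rfl
    refine ⟨by simp, ?_⟩
    rw [this]
    simp [hji]
  · simp only [dif_neg h, dif_pos (⟨j, ⟨u, hu, hLu⟩⟩ : ∃ j : Fin k, ∃ u, G.Adj u v ∧ L u = some (some j))]
    simp

lemma stepLabel_of_no_witness {L : V → Option (Option (Fin k))} {v : V}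
    (h0 : L v = none)
    (h : ∀ (u : V) (j : Fin k), G.Adj u v → L u ≠ some (some j)) :
    stepLabel G L v = none := by
  rw [stepLabel, h0]
  rw [dif_neg, dif_neg]
  · rintro ⟨j, u, hu, hLu⟩; exact h u j hu hLu
  · rintro ⟨j, ⟨u, hu, hLu⟩, -⟩; exact h u j hu hLu

/-- The master containment lemma: if `S` contains all initial `i`-labels, every
neighbour of `S` outside `S` is in the shield `T`, and every vertex of `T` is,
after one step, labelled with something other than `i`'s domination, then `i`'s
final territory is contained in `S`. -/
lemma final_subset [Fintype V] (hpos : 0 < Fintype.card V) {i : Fin k} (S T : Set V)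
    (hinit : ∀ v, initLabel s v = some (some i) → v ∈ S)
    (hfront : ∀ u ∈ S, ∀ v, G.Adj u v → v ∈ S ∨ v ∈ T)
    (hT : ∀ v ∈ T, stepLabel G (initLabel s) v ≠ none ∧
      stepLabel G (initLabel s) v ≠ some (some i)) :
    ∀ v, finalLabel G s v = some (some i) → v ∈ S := by
  set Q : (V → Option (Option (Fin k))) → Prop :=
    fun L => (∀ v ∈ T, L v ≠ none ∧ L v ≠ some (some i)) ∧
      (∀ v, v ∉ S → L v ≠ some (some i)) with hQ
  have key : ∀ L, (∀ v, L v = some (some i) → v ∈ S) → (∀ v ∈ T, stepLabel G L v ≠ none ∧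
      stepLabel G L v ≠ some (some i)) → ∀ v, v ∉ S → stepLabel G L v ≠ some (some i) := by
    intro L hLS hLT v hv hcon
    cases hLv : L v with
    | some x =>
      rw [stepLabel_of_some G hLv] at hcon
      exact hv (hLS v (hLv.trans hcon))
    | none =>
      by_cases hvT : v ∈ T
      · exact (hLT v hvT).2 hcon
      rw [stepLabel, hLv] at hcon
      by_cases h : ∃! j : Fin k, ∃ u, G.Adj u v ∧ L u = some (some j)
      · simp only [dif_pos h] at hcon
        have hch : h.choose = i :=
          Option.some_injective _ (Option.some_injective _ hcon)
        obtain ⟨u, hu, hLu⟩ := h.choose_spec.1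
        rw [hch] at hLu
        rcases hfront u (hLS u hLu) v hu with h1 | h1
        · exact hv h1
        · exact hvT h1
      · simp only [dif_neg h] at hcon
        split at hcon <;> simp_all
  have hpres : ∀ L, Q L → Q (fun v => stepLabel G L v) := by
    rintro L ⟨hQT, hQS⟩
    refine ⟨?_, ?_⟩
    · intro v hv
      obtain ⟨h1, h2⟩ := hQT v hv
      cases hLv : L v with
      | none => exact absurd hLv h1
      | some x =>
        show stepLabel G L v ≠ none ∧ stepLabel G L v ≠ some (some i)
        rw [stepLabel_of_some G hLv]
        exact ⟨by simp, hLv ▸ h2⟩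
    · intro v hv
      refine key L (fun v hv' => by_contra fun hvs => hQS v hvs hv') ?_ v hv
      intro v hv
      obtain ⟨h1, h2⟩ := hQT v hv
      cases hLv : L v with
      | none => exact absurd hLv h1
      | some x =>
        rw [stepLabel_of_some G hLv]
        exact ⟨by simp, hLv ▸ h2⟩
  have hbase : Q (fun v => stepLabel G (initLabel s) v) := by
    refine ⟨hT, ?_⟩
    exact key (initLabel s) hinit hT
  intro v hfin
  by_contra hv
  have heq : finalLabel G s =
      (fun L v => stepLabel G L v)^[Fintype.card V - 1]
        (fun v => stepLabel G (initLabel s) v) := by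
    rw [finalLabel, ← Function.iterate_succ_apply]
    congr 1
    omega
  have hQfin : Q ((fun L v => stepLabel G L v)^[Fintype.card V - 1]
      (fun v => stepLabel G (initLabel s) v)) := by
    generalize (Fintype.card V - 1) = m
    induction m with
    | zero => exact hbase
    | succ m ih => rw [Function.iterate_succ_apply']; exact hpres _ ih
  rw [heq] at hfin
  exact hQfin.2 v hv hfin

lemma utility_eq_card [Fintype V] (i : Fin k) :
    utility G (fun _ => (1 : ℤ)) s i =
      ((Finset.univ.filter (fun v => finalLabel G s v = some (some i))).card : ℤ) := by
  simp [utility]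

lemma utility_nonneg [Fintype V] (i : Fin k) :
    0 ≤ utility G (fun _ => (1 : ℤ)) s i := by
  rw [utility_eq_card]; positivity

lemma utility_le_card [Fintype V] [DecidableEq V] {i : Fin k} (S : Finset V)
    (h : ∀ v, finalLabel G s v = some (some i) → v ∈ S) :
    utility G (fun _ => (1 : ℤ)) s i ≤ (S.card : ℤ) := by
  rw [utility_eq_card]
  exact_mod_cast Finset.card_le_card (fun v hv => h v (Finset.mem_filter.mp hv).2)

lemma card_le_utility [Fintype V] [DecidableEq V] {i : Fin k} (F : Finset V)
    (h : ∀ v ∈ F, finalLabel G s v = some (some i)) :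
    (F.card : ℤ) ≤ utility G (fun _ => (1 : ℤ)) s i := by
  rw [utility_eq_card]
  exact_mod_cast Finset.card_le_card
    (fun v hv => Finset.mem_filter.mpr ⟨Finset.mem_univ v, h v hv⟩)

/-- If player `i` collides with another player, it dominates nothing. -/
lemma utility_collision [Fintype V] {i j : Fin k} (hij : j ≠ i) (hcol : s j = s i) :
    utility G (fun _ => (1 : ℤ)) s i = 0 := by
  have key : ∀ v, finalLabel G s v ≠ some (some i) := by
    have hinit : ∀ v, initLabel s v ≠ some (some i) := by
      intro v hcon
      have := initLabel_player s hcon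
      have h1 : ∃! m, s m = v := by
        by_contra h1
        rw [initLabel, dif_neg h1] at hcon
        split at hcon <;> simp_all
      exact hij (h1.unique (hcol.trans this) this)
    have hpres : ∀ L : V → Option (Option (Fin k)), (∀ v, L v ≠ some (some i)) →
        ∀ v, stepLabel G L v ≠ some (some i) := by
      intro L hL v hcon
      cases hLv : L v with
      | some x =>
        rw [stepLabel_of_some G hLv] at hcon
        exact hL v (hLv.trans hcon)
      | none =>
        rw [stepLabel, hLv] at hcon
        by_cases h : ∃! j : Fin k, ∃ u, G.Adj u v ∧ L u = some (some j)
        · simp only [dif_pos h] at hcon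
          have hch : h.choose = i :=
            Option.some_injective _ (Option.some_injective _ hcon)
          obtain ⟨u, hu, hLu⟩ := h.choose_spec.1
          rw [hch] at hLu
          exact hL u hLu
        · simp only [dif_neg h] at hcon
          split at hcon <;> simp_all
    have : ∀ m, ∀ v, (fun L v => stepLabel G L v)^[m] (initLabel s) v ≠ some (some i) := by
      intro m
      induction m with
      | zero => exact hinit
      | succ m ih =>
        intro v
        rw [Function.iterate_succ_apply']
        exact hpres _ ih v
    exact this _
  rw [utility_eq_card]
  have : (Finset.univ.filter (fun v => finalLabel G s v = some (some i))) = ∅ := by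
    ext v; simp [key v]
  rw [this]; simp

end Generic

section GpLemmas

variable {n : ℕ} {G : SimpleGraph (Fin n)} [DecidableRel G.Adj]

/-- vertex abbreviations -/
abbrev pA (i : Fin 4) : VGp n G := Sum.inl (Sum.inl i)
abbrev pL1 (l : Fin n) : VGp n G := Sum.inl (Sum.inr (Sum.inl l))
abbrev pL4 (l : Fin n) : VGp n G := Sum.inl (Sum.inr (Sum.inr l))
abbrev pV (v : Fin n) : VGp n G := Sum.inr (Sum.inl v)
abbrev pE (e : G.edgeSet) : VGp n G := Sum.inr (Sum.inr (Sum.inl e))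
abbrev pVL (x : Σ v : Fin n, Fin (n - G.degree v)) : VGp n G :=
  Sum.inr (Sum.inr (Sum.inr (Sum.inl x)))
abbrev pB : VGp n G := Sum.inr (Sum.inr (Sum.inr (Sum.inr (Sum.inl ()))))
abbrev pBL (l : Fin (n ^ 3)) : VGp n G := Sum.inr (Sum.inr (Sum.inr (Sum.inr (Sum.inr l))))

lemma nbr_pV {u : VGp n G} {v : Fin n} (h : (Gp n G).Adj u (pV v)) :
    u = pB ∨ (∃ e : G.edgeSet, v ∈ (e : Sym2 (Fin n)) ∧ u = pE e) ∨
      (∃ x : Σ w : Fin n, Fin (n - G.degree w), x.1 = v ∧ u = pVL x) := by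
  rw [Gp, SimpleGraph.fromRel_adj] at h
  obtain ⟨-, h | h⟩ := h <;>
  · rcases u with (i | l | l) | (w | e | ⟨w, l⟩ | ⟨⟩ | l) <;>
      simp_all [relGp] <;> tauto

lemma nbr_pE {u : VGp n G} {e : G.edgeSet} (h : (Gp n G).Adj u (pE e)) :
    ∃ v : Fin n, v ∈ (e : Sym2 (Fin n)) ∧ u = pV v := by
  rw [Gp, SimpleGraph.fromRel_adj] at h
  obtain ⟨-, h | h⟩ := h <;>
  · rcases u with (i | l | l) | (w | e' | ⟨w, l⟩ | ⟨⟩ | l) <;>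
      simp_all [relGp] <;> tauto

lemma nbr_pVL {u : VGp n G} {x : Σ w : Fin n, Fin (n - G.degree w)}
    (h : (Gp n G).Adj u (pVL x)) : u = pV x.1 := by
  rw [Gp, SimpleGraph.fromRel_adj] at h
  obtain ⟨-, h | h⟩ := h <;>
  · rcases u with (i | l | l) | (w | e' | ⟨w, l⟩ | ⟨⟩ | l) <;> rcases x with ⟨v', l'⟩ <;>
      simp_all [relGp]

lemma nbr_pB {u : VGp n G} (h : (Gp n G).Adj u pB) :
    (∃ v : Fin n, u = pV v) ∨ (∃ l : Fin (n ^ 3), u = pBL l) := by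
  rw [Gp, SimpleGraph.fromRel_adj] at h
  obtain ⟨-, h | h⟩ := h <;>
  · rcases u with (i | l | l) | (w | e' | ⟨w, l⟩ | ⟨⟩ | l) <;>
      simp_all [relGp] <;> tauto

lemma nbr_pBL {u : VGp n G} {l : Fin (n ^ 3)} (h : (Gp n G).Adj u (pBL l)) :
    u = pB := by
  rw [Gp, SimpleGraph.fromRel_adj] at h
  obtain ⟨-, h | h⟩ := h <;>
  · rcases u with (i | l' | l') | (w | e' | ⟨w, l'⟩ | ⟨⟩ | l') <;>
      simp_all [relGp]

lemma nbr_pL1 {u : VGp n G} {l : Fin n} (h : (Gp n G).Adj u (pL1 l)) :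
    u = pA 0 := by
  rw [Gp, SimpleGraph.fromRel_adj] at h
  obtain ⟨-, h | h⟩ := h <;>
  · rcases u with (i | l' | l') | (w | e' | ⟨w, l'⟩ | ⟨⟩ | l') <;>
      simp_all [relGp] <;> exact Fin.ext h

lemma nbr_pL4 {u : VGp n G} {l : Fin n} (h : (Gp n G).Adj u (pL4 l)) :
    u = pA 3 := by
  rw [Gp, SimpleGraph.fromRel_adj] at h
  obtain ⟨-, h | h⟩ := h <;>
  · rcases u with (i | l' | l') | (w | e' | ⟨w, l'⟩ | ⟨⟩ | l') <;>
      simp_all [relGp] <;> exact Fin.ext h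

lemma nbr_pA {u : VGp n G} {i : Fin 4} (h : (Gp n G).Adj u (pA i)) :
    (∃ i' : Fin 4, ((i' : ℕ) + 1 = (i : ℕ) ∨ (i : ℕ) + 1 = (i' : ℕ)) ∧ u = pA i') ∨
      ((i : ℕ) = 0 ∧ ∃ l, u = pL1 l) ∨ ((i : ℕ) = 3 ∧ ∃ l, u = pL4 l) := by
  rw [Gp, SimpleGraph.fromRel_adj] at h
  obtain ⟨-, h | h⟩ := h <;>
  · rcases u with (i' | l' | l') | (w | e' | ⟨w, l'⟩ | ⟨⟩ | l') <;>
      simp_all [relGp] <;> tauto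

lemma adj_pV_pE {v : Fin n} {e : G.edgeSet} (h : v ∈ (e : Sym2 (Fin n))) :
    (Gp n G).Adj (pV v) (pE e) := by
  rw [Gp, SimpleGraph.fromRel_adj]
  exact ⟨by simp, Or.inl h⟩

lemma adj_pV_pVL (x : Σ w : Fin n, Fin (n - G.degree w)) :
    (Gp n G).Adj (pV x.1) (pVL x) := by
  rw [Gp, SimpleGraph.fromRel_adj]
  exact ⟨by simp, Or.inl (by rcases x with ⟨v, l⟩; simp [relGp])⟩

lemma adj_pV_pB (v : Fin n) : (Gp n G).Adj (pV v) pB := by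
  rw [Gp, SimpleGraph.fromRel_adj]
  exact ⟨by simp, Or.inl trivial⟩

lemma adj_pB_pBL (l : Fin (n ^ 3)) : (Gp n G).Adj pB (pBL l) := by
  rw [Gp, SimpleGraph.fromRel_adj]
  exact ⟨by simp, Or.inl trivial⟩

lemma adj_pA {i i' : Fin 4} (h : (i : ℕ) + 1 = (i' : ℕ)) :
    (Gp n G).Adj (pA i) (pA i') := by
  rw [Gp, SimpleGraph.fromRel_adj]
  refine ⟨by simp; omega, Or.inl h⟩

lemma adj_pA0_pL1 (l : Fin n) : (Gp n G).Adj (pA 0) (pL1 l) := by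
  rw [Gp, SimpleGraph.fromRel_adj]
  exact ⟨by simp, Or.inl rfl⟩

lemma adj_pA3_pL4 (l : Fin n) : (Gp n G).Adj (pA 3) (pL4 l) := by
  rw [Gp, SimpleGraph.fromRel_adj]
  exact ⟨by simp, Or.inl rfl⟩

end GpLemmas

section Finsets

variable {n : ℕ} {G : SimpleGraph (Fin n)} [DecidableRel G.Adj]

def EincF (u : Fin n) : Finset (VGp n G) :=
  (Finset.univ.filter fun e : G.edgeSet => u ∈ (e : Sym2 (Fin n))).image pE

def VLF (u : Fin n) : Finset (VGp n G) :=
  Finset.univ.image (fun l : Fin (n - G.degree u) => pVL ⟨u, l⟩)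

def SorigF (u : Fin n) : Finset (VGp n G) := insert (pV u) (EincF u ∪ VLF u)

lemma mem_SorigF {u : Fin n} {v : VGp n G} :
    v ∈ SorigF u ↔ v = pV u ∨ (∃ e : G.edgeSet, u ∈ (e : Sym2 (Fin n)) ∧ v = pE e) ∨
      (∃ l, v = pVL ⟨u, l⟩) := by
  rw [SorigF, Finset.mem_insert, Finset.mem_union, EincF, VLF]
  simp only [Finset.mem_image, Finset.mem_filter, Finset.mem_univ, true_and]
  constructor
  · rintro (h | ⟨e, he, rfl⟩ | ⟨l, rfl⟩)
    · exact Or.inl h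
    · exact Or.inr (Or.inl ⟨e, he, rfl⟩)
    · exact Or.inr (Or.inr ⟨l, rfl⟩)
  · rintro (h | ⟨e, he, rfl⟩ | ⟨l, rfl⟩)
    · exact Or.inl h
    · exact Or.inr (Or.inl ⟨e, he, rfl⟩)
    · exact Or.inr (Or.inr ⟨l, rfl⟩)

lemma pE_inj : Function.Injective (pE (n := n) (G := G)) := by
  intro a b h; simpa using h

lemma pV_inj : Function.Injective (pV (n := n) (G := G)) := by
  intro a b h; simpa using h

lemma pVL_inj : Function.Injective (pVL (n := n) (G := G)) := by
  intro a b h; simpa using h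

lemma pBL_inj : Function.Injective (pBL (n := n) (G := G)) := by
  intro a b h; simpa using h

lemma pL1_inj : Function.Injective (pL1 (n := n) (G := G)) := by
  intro a b h; simpa using h

lemma pL4_inj : Function.Injective (pL4 (n := n) (G := G)) := by
  intro a b h; simpa using h

lemma card_EincF (u : Fin n) : (EincF (G := G) u).card = G.degree u := by
  rw [EincF, Finset.card_image_of_injective _ pE_inj, ← Fintype.card_subtype,
    ← SimpleGraph.card_incidenceSet_eq_degree G u]
  refine Fintype.card_congr ⟨fun x => ⟨x.1.1, x.1.2, x.2⟩,
    fun x => ⟨⟨x.1, x.2.1⟩, x.2.2⟩, fun x => rfl, fun x => rfl⟩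

lemma card_VLF (u : Fin n) : (VLF (G := G) u).card = n - G.degree u := by
  rw [VLF, Finset.card_image_of_injective _ (fun a b h => by simpa using h),
    Finset.card_univ, Fintype.card_fin]

lemma degree_le (u : Fin n) : G.degree u ≤ n := by
  classical
  calc G.degree u = (G.neighborFinset u).card := (G.card_neighborFinset_eq_degree u).symm
  _ ≤ (Finset.univ : Finset (Fin n)).card := Finset.card_le_univ _
  _ = n := by simp

lemma card_SorigF (u : Fin n) : (SorigF (G := G) u).card = n + 1 := by
  have h1 : (pV (G := G) u) ∉ EincF u ∪ VLF u := by
    rw [Finset.mem_union, EincF, VLF]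
    simp only [Finset.mem_image, Finset.mem_filter, Finset.mem_univ, true_and]
    rintro (⟨e, -, h⟩ | ⟨l, h⟩) <;> simp at h
  have h2 : Disjoint (EincF (G := G) u) (VLF u) := by
    rw [Finset.disjoint_left]
    rintro a ha hb
    rw [EincF, Finset.mem_image] at ha
    rw [VLF, Finset.mem_image] at hb
    obtain ⟨e, -, rfl⟩ := ha
    obtain ⟨l, -, h⟩ := hb
    simp at h
  rw [SorigF, Finset.card_insert_of_notMem h1, Finset.card_union_of_disjoint h2,
    card_EincF, card_VLF]
  have := degree_le (G := G) u
  omega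

def SA1F : Finset (VGp n G) := insert (pA 0) (Finset.univ.image pL1)

def SA4F : Finset (VGp n G) := insert (pA 3) (Finset.univ.image pL4)

lemma mem_SA1F {v : VGp n G} : v ∈ SA1F ↔ v = pA 0 ∨ ∃ l, v = pL1 l := by
  rw [SA1F, Finset.mem_insert]
  simp only [Finset.mem_image, Finset.mem_univ, true_and]
  constructor
  · rintro (h | ⟨l, rfl⟩)
    · exact Or.inl h
    · exact Or.inr ⟨l, rfl⟩
  · rintro (h | ⟨l, rfl⟩)
    · exact Or.inl h
    · exact Or.inr ⟨l, rfl⟩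

lemma mem_SA4F {v : VGp n G} : v ∈ SA4F ↔ v = pA 3 ∨ ∃ l, v = pL4 l := by
  rw [SA4F, Finset.mem_insert]
  simp only [Finset.mem_image, Finset.mem_univ, true_and]
  constructor
  · rintro (h | ⟨l, rfl⟩)
    · exact Or.inl h
    · exact Or.inr ⟨l, rfl⟩
  · rintro (h | ⟨l, rfl⟩)
    · exact Or.inl h
    · exact Or.inr ⟨l, rfl⟩

lemma card_SA1F : (SA1F (n := n) (G := G)).card = n + 1 := by
  have h1 : (pA (G := G) 0) ∉ Finset.univ.image pL1 := by
    rw [Finset.mem_image]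
    rintro ⟨l, -, h⟩; simp at h
  rw [SA1F, Finset.card_insert_of_notMem h1,
    Finset.card_image_of_injective _ pL1_inj, Finset.card_univ, Fintype.card_fin]

lemma card_SA4F : (SA4F (n := n) (G := G)).card = n + 1 := by
  have h1 : (pA (G := G) 3) ∉ Finset.univ.image pL4 := by
    rw [Finset.mem_image]
    rintro ⟨l, -, h⟩; simp at h
  rw [SA4F, Finset.card_insert_of_notMem h1,
    Finset.card_image_of_injective _ pL4_inj, Finset.card_univ, Fintype.card_fin]

def SBF : Finset (VGp n G) :=
  (Finset.univ.image pV) ∪ (Finset.univ.image pE) ∪ (Finset.univ.image pVL)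

lemma mem_SBF {v : VGp n G} :
    v ∈ SBF ↔ (∃ w, v = pV w) ∨ (∃ e, v = pE e) ∨ (∃ x, v = pVL x) := by
  rw [SBF, Finset.mem_union, Finset.mem_union]
  simp only [Finset.mem_image, Finset.mem_univ, true_and]
  constructor
  · rintro ((⟨w, rfl⟩ | ⟨e, rfl⟩) | ⟨x, rfl⟩)
    · exact Or.inl ⟨w, rfl⟩
    · exact Or.inr (Or.inl ⟨e, rfl⟩)
    · exact Or.inr (Or.inr ⟨x, rfl⟩)
  · rintro (⟨w, rfl⟩ | ⟨e, rfl⟩ | ⟨x, rfl⟩)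
    · exact Or.inl (Or.inl ⟨w, rfl⟩)
    · exact Or.inl (Or.inr ⟨e, rfl⟩)
    · exact Or.inr ⟨x, rfl⟩

lemma card_SBF_le : (SBF (n := n) (G := G)).card ≤ n + n ^ 2 := by
  have h1 : (SBF (n := n) (G := G)).card ≤
      n + (Fintype.card G.edgeSet + Fintype.card (Σ v : Fin n, Fin (n - G.degree v))) := by
    calc (SBF (n := n) (G := G)).card ≤
        (Finset.univ.image (pV (n := n) (G := G))).card +
          (Finset.univ.image (pE (n := n) (G := G))).card +
          (Finset.univ.image (pVL (n := n) (G := G))).card := by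
          refine le_trans (Finset.card_union_le _ _) ?_
          exact Nat.add_le_add_right (Finset.card_union_le _ _) _
    _ = n + (Fintype.card G.edgeSet + Fintype.card (Σ v : Fin n, Fin (n - G.degree v))) := by
          rw [Finset.card_image_of_injective _ pV_inj,
            Finset.card_image_of_injective _ pE_inj,
            Finset.card_image_of_injective _ pVL_inj]
          rw [Finset.card_univ, Finset.card_univ, Finset.card_univ, Fintype.card_fin]
          omega
  refine h1.trans ?_
  have h2 : Fintype.card (Σ v : Fin n, Fin (n - G.degree v)) =
      ∑ v : Fin n, (n - G.degree v) := by
    rw [Fintype.card_sigma]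
    exact Finset.sum_congr rfl (fun v _ => Fintype.card_fin _)
  have h3 : ∑ v : Fin n, (n - G.degree v) + ∑ v : Fin n, G.degree v = n ^ 2 := by
    rw [← Finset.sum_add_distrib]
    rw [Finset.sum_congr rfl (fun v _ => by have := degree_le (G := G) v; omega : 
      ∀ v ∈ Finset.univ, (n - G.degree v) + G.degree v = n)]
    simp [sq]
  have h4 : ∑ v : Fin n, G.degree v = 2 * Fintype.card G.edgeSet := by
    rw [← SimpleGraph.edgeFinset_card]
    exact G.sum_degrees_eq_twice_card_edges
  omega

def SBLF : Finset (VGp n G) := insert pB (Finset.univ.image pBL)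

lemma mem_SBLF {v : VGp n G} : v ∈ SBLF ↔ v = pB ∨ ∃ l, v = pBL l := by
  rw [SBLF, Finset.mem_insert]
  simp only [Finset.mem_image, Finset.mem_univ, true_and]
  constructor
  · rintro (h | ⟨l, rfl⟩)
    · exact Or.inl h
    · exact Or.inr ⟨l, rfl⟩
  · rintro (h | ⟨l, rfl⟩)
    · exact Or.inl h
    · exact Or.inr ⟨l, rfl⟩

lemma card_SBLF : (SBLF (n := n) (G := G)).card = 1 + n ^ 3 := by
  have h1 : (pB (n := n) (G := G)) ∉ Finset.univ.image pBL := by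
    rw [Finset.mem_image]
    rintro ⟨l, -, h⟩; simp at h
  rw [SBLF, Finset.card_insert_of_notMem h1,
    Finset.card_image_of_injective _ pBL_inj, Finset.card_univ, Fintype.card_fin]
  omega

def SBallF : Finset (VGp n G) := SBF ∪ SBLF

lemma mem_SBallF {v : VGp n G} :
    v ∈ SBallF ↔ (∃ w, v = pV w) ∨ (∃ e, v = pE e) ∨ (∃ x, v = pVL x) ∨
      v = pB ∨ ∃ l, v = pBL l := by
  rw [SBallF, Finset.mem_union, mem_SBF, mem_SBLF]
  tauto

lemma nnpow : n + n ^ 2 ≤ 1 + n ^ 3 := by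
  rcases n with _ | _ | m
  · simp
  · simp
  · nlinarith [sq_nonneg (m + 2)]

lemma card_VGp_ge : 2 ≤ Fintype.card (VGp n G) := by
  have h : Fintype.card (VGp n G) =
      Fintype.card (Fin 4 ⊕ (Fin n ⊕ Fin n)) + Fintype.card (Fin n ⊕ (G.edgeSet ⊕
        ((Σ v : Fin n, Fin (n - G.degree v)) ⊕ (Unit ⊕ Fin (n ^ 3))))) :=
    Fintype.card_sum
  have h2 : Fintype.card (Fin 4 ⊕ (Fin n ⊕ Fin n)) =
      4 + Fintype.card (Fin n ⊕ Fin n) := by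
    rw [Fintype.card_sum, Fintype.card_fin]
  omega

end Finsets

section Dev

variable {n : ℕ} {G : SimpleGraph (Fin n)} [DecidableRel G.Adj]
  {m : ℕ} {s : Fin m → VGp n G} {i : Fin m}

lemma initLabel_seed (hinj : Function.Injective s) (j : Fin m) :
    initLabel s (s j) = some (some j) :=
  initLabel_of_unique s rfl (fun _ h => hinj h)

lemma shield_seed (hinj : Function.Injective s) {p : Fin m} {v : VGp n G}
    (hpi : p ≠ i) (hp : s p = v) :
    stepLabel (Gp n G) (initLabel s) v ≠ none ∧
      stepLabel (Gp n G) (initLabel s) v ≠ some (some i) := by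
  have h0 : initLabel s v = some (some p) :=
    initLabel_of_unique s hp (fun j hj => hinj (hj.trans hp.symm))
  rw [stepLabel_of_some _ h0]
  refine ⟨by simp, ?_⟩
  intro h
  exact hpi (Option.some_injective _ (Option.some_injective _ h))

lemma shield_witness (hinj : Function.Injective s) {v u : VGp n G}
    (hfree : ∀ j, s j ≠ v) (hadj : (Gp n G).Adj u v) {p : Fin m}
    (hpi : p ≠ i) (hp : s p = u) :
    stepLabel (Gp n G) (initLabel s) v ≠ none ∧
      stepLabel (Gp n G) (initLabel s) v ≠ some (some i) := by
  have h0 : initLabel s v = none := initLabel_of_not_mem s hfree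
  have h1 : initLabel s u = some (some p) :=
    initLabel_of_unique s hp (fun j hj => hinj (hj.trans hp.symm))
  exact stepLabel_witness_ne (Gp n G) h0 hadj h1 hpi

lemma pos_VGp : 0 < Fintype.card (VGp n G) := lt_of_lt_of_le (by norm_num) card_VGp_ge

lemma utility_le_master (SF : Finset (VGp n G)) (T : Set (VGp n G))
    (hsi : s i ∈ SF)
    (hfront : ∀ u ∈ SF, ∀ v, (Gp n G).Adj u v → v ∈ SF ∨ v ∈ T)
    (hT : ∀ v ∈ T, stepLabel (Gp n G) (initLabel s) v ≠ none ∧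
      stepLabel (Gp n G) (initLabel s) v ≠ some (some i)) :
    utility (Gp n G) (fun _ => (1 : ℤ)) s i ≤ (SF.card : ℤ) := by
  refine utility_le_card _ _ SF ?_
  exact final_subset (Gp n G) s pos_VGp {v | v ∈ SF} T
    (fun v hv => by
      have := initLabel_player s hv
      simpa [← this] using hsi)
    hfront hT

/-- Deviation inside `B` to a subdivision vertex, a pendant leaf of an original
vertex, or a pendant leaf of `b`, while `b` is occupied by another player. -/
lemma dev_small (hinj : Function.Injective s)
    (hb : ∃ p, p ≠ i ∧ s p = pB)
    (hsi : (∃ e, s i = pE e) ∨ (∃ x, s i = pVL x) ∨ (∃ l, s i = pBL l)) :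
    utility (Gp n G) (fun _ => (1 : ℤ)) s i ≤ 1 := by
  obtain ⟨p, hpi, hp⟩ := hb
  have h := utility_le_master {s i} ({v | v = pB ∨ ∃ w, v = pV w})
    (Finset.mem_singleton_self _)
    (by
      intro u hu v hadj
      rw [Finset.mem_singleton] at hu
      subst hu
      rcases hsi with ⟨e, he⟩ | ⟨x, hx⟩ | ⟨l, hl⟩
      · rw [he] at hadj
        obtain ⟨w, -, rfl⟩ := nbr_pE hadj.symm
        exact Or.inr (Or.inr ⟨w, rfl⟩)
      · rw [hx] at hadj
        have := nbr_pVL hadj.symm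
        exact Or.inr (Or.inr ⟨x.1, this⟩)
      · rw [hl] at hadj
        have := nbr_pBL hadj.symm
        exact Or.inr (Or.inl this))
    (by
      rintro v (rfl | ⟨w, rfl⟩)
      · exact shield_seed hinj hpi hp
      · by_cases hw : ∃ j, s j = pV w
        · obtain ⟨j, hj⟩ := hw
          have hji : j ≠ i := by
            rintro rfl
            rcases hsi with ⟨e, he⟩ | ⟨x, hx⟩ | ⟨l, hl⟩ <;> simp_all
          exact shield_seed hinj hji hj
        · push_neg at hw
          exact shield_witness hinj hw (adj_pV_pB w).symm hpi hp)
  simpa using h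

/-- Deviation to a free original vertex `u` while `b` is occupied by another player. -/
lemma dev_orig (hinj : Function.Injective s)
    (hb : ∃ p, p ≠ i ∧ s p = pB) {u : Fin n} (hsi : s i = pV u) :
    utility (Gp n G) (fun _ => (1 : ℤ)) s i ≤ (n : ℤ) + 1 := by
  obtain ⟨p, hpi, hp⟩ := hb
  have h := utility_le_master (SorigF (G := G) u) ({v | v = pB ∨ ∃ w, w ≠ u ∧ v = pV w})
    (by rw [mem_SorigF]; exact Or.inl hsi)
    (by
      intro x hx v hadj
      rw [mem_SorigF] at hx
      rcases hx with rfl | ⟨e, he, rfl⟩ | ⟨l, rfl⟩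
      · rcases nbr_pV hadj.symm with rfl | ⟨e, he, rfl⟩ | ⟨y, hy, rfl⟩
        · exact Or.inr (Or.inl rfl)
        · exact Or.inl (mem_SorigF.mpr (Or.inr (Or.inl ⟨e, he, rfl⟩)))
        · refine Or.inl (mem_SorigF.mpr (Or.inr (Or.inr ?_)))
          rcases y with ⟨w, l⟩
          cases hy
          exact ⟨l, rfl⟩
      · obtain ⟨w, hw, rfl⟩ := nbr_pE hadj.symm
        by_cases hwu : w = u
        · subst hwu
          exact Or.inl (mem_SorigF.mpr (Or.inl rfl))
        · exact Or.inr (Or.inr ⟨w, hwu, rfl⟩)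
      · have := nbr_pVL hadj.symm
        exact Or.inl (mem_SorigF.mpr (Or.inl this))
    )
    (by
      rintro v (rfl | ⟨w, hwu, rfl⟩)
      · exact shield_seed hinj hpi hp
      · by_cases hw : ∃ j, s j = pV w
        · obtain ⟨j, hj⟩ := hw
          have hji : j ≠ i := by
            rintro rfl
            rw [hsi] at hj
            exact hwu (by simpa using hj.symm)
          exact shield_seed hinj hji hj
        · push_neg at hw
          exact shield_witness hinj hw (adj_pV_pB w).symm hpi hp)
  rw [card_SorigF (G := G)] at h
  exact_mod_cast h

/-- Deviation to `a₁` or a pendant leaf of `a₁`. -/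
lemma dev_a1 (hinj : Function.Injective s)
    (hsi : s i = pA 0 ∨ ∃ l, s i = pL1 l)
    (hsh : (∃ p, p ≠ i ∧ s p = pA 1) ∨
      ((∀ j, s j ≠ pA 1) ∧ ∃ p, p ≠ i ∧ s p = pA 2)) :
    utility (Gp n G) (fun _ => (1 : ℤ)) s i ≤ (n : ℤ) + 1 := by
  have h := utility_le_master (SA1F (n := n) (G := G)) {v | v = pA 1}
    (by
      rw [mem_SA1F]
      rcases hsi with h | ⟨l, hl⟩
      · exact Or.inl h
      · exact Or.inr ⟨l, hl⟩)
    (by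
      intro x hx v hadj
      rw [mem_SA1F] at hx
      rcases hx with rfl | ⟨l, rfl⟩
      · rcases nbr_pA hadj.symm with ⟨i', hi', rfl⟩ | ⟨h0, l, rfl⟩ | ⟨h3, l, rfl⟩
        · have : i' = 1 := by fin_cases i' <;> simp_all
          subst this
          right; rfl
        · exact Or.inl (mem_SA1F.mpr (Or.inr ⟨l, rfl⟩))
        · exact absurd h3 (by decide)
      · have := nbr_pL1 hadj.symm
        exact Or.inl (mem_SA1F.mpr (Or.inl this)))
    (by
      rintro v rfl
      rcases hsh with ⟨p, hpi, hp⟩ | ⟨hfree, p, hpi, hp⟩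
      · exact shield_seed hinj hpi hp
      · exact shield_witness hinj hfree
          ((adj_pA (i := 1) (i' := 2) rfl).symm) hpi hp)
  rw [card_SA1F (n := n) (G := G)] at h
  exact_mod_cast h

/-- Deviation to `a₄` or a pendant leaf of `a₄`. -/
lemma dev_a4 (hinj : Function.Injective s)
    (hsi : s i = pA 3 ∨ ∃ l, s i = pL4 l)
    (hsh : (∃ p, p ≠ i ∧ s p = pA 2) ∨
      ((∀ j, s j ≠ pA 2) ∧ ∃ p, p ≠ i ∧ s p = pA 1)) :
    utility (Gp n G) (fun _ => (1 : ℤ)) s i ≤ (n : ℤ) + 1 := by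
  have h := utility_le_master (SA4F (n := n) (G := G)) {v | v = pA 2}
    (by
      rw [mem_SA4F]
      rcases hsi with h | ⟨l, hl⟩
      · exact Or.inl h
      · exact Or.inr ⟨l, hl⟩)
    (by
      intro x hx v hadj
      rw [mem_SA4F] at hx
      rcases hx with rfl | ⟨l, rfl⟩
      · rcases nbr_pA hadj.symm with ⟨i', hi', rfl⟩ | ⟨h0, l, rfl⟩ | ⟨h3, l, rfl⟩
        · have : i' = 2 := by fin_cases i' <;> simp_all <;> omega
          subst this
          right; rfl
        · exact absurd h0 (by decide)
        · exact Or.inl (mem_SA4F.mpr (Or.inr ⟨l, rfl⟩))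
      · have := nbr_pL4 hadj.symm
        exact Or.inl (mem_SA4F.mpr (Or.inl this)))
    (by
      rintro v rfl
      rcases hsh with ⟨p, hpi, hp⟩ | ⟨hfree, p, hpi, hp⟩
      · exact shield_seed hinj hpi hp
      · exact shield_witness hinj hfree
          ((adj_pA (i := 1) (i' := 2) rfl)) hpi hp)
  rw [card_SA4F (n := n) (G := G)] at h
  exact_mod_cast h

/-- The `b`-player deviating to an original vertex, subdivision vertex or original
leaf when at least one original vertex is occupied by another player. -/
lemma dev_bplayer_B (hinj : Function.Injective s)
    (hbfree : ∀ j, s j ≠ pB)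
    (hw : ∃ p w, p ≠ i ∧ s p = pV w)
    (hsi : (∃ w, s i = pV w) ∨ (∃ e, s i = pE e) ∨ (∃ x, s i = pVL x)) :
    utility (Gp n G) (fun _ => (1 : ℤ)) s i ≤ (n : ℤ) + n ^ 2 := by
  obtain ⟨p, w₀, hpi, hp⟩ := hw
  have h := utility_le_master (SBF (n := n) (G := G)) {v | v = pB}
    (by
      rw [mem_SBF]
      exact hsi)
    (by
      intro x hx v hadj
      rw [mem_SBF] at hx
      rcases hx with ⟨w, rfl⟩ | ⟨e, rfl⟩ | ⟨x, rfl⟩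
      · rcases nbr_pV hadj.symm with rfl | ⟨e, he, rfl⟩ | ⟨y, hy, rfl⟩
        · exact Or.inr rfl
        · exact Or.inl (mem_SBF.mpr (Or.inr (Or.inl ⟨e, rfl⟩)))
        · exact Or.inl (mem_SBF.mpr (Or.inr (Or.inr ⟨y, rfl⟩)))
      · obtain ⟨w, -, rfl⟩ := nbr_pE hadj.symm
        exact Or.inl (mem_SBF.mpr (Or.inl ⟨w, rfl⟩))
      · have := nbr_pVL hadj.symm
        exact Or.inl (mem_SBF.mpr (Or.inl ⟨x.1, this⟩)))
    (by
      rintro v rfl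
      exact shield_witness hinj hbfree (adj_pV_pB w₀) hpi hp)
  have h2 := card_SBF_le (n := n) (G := G)
  calc utility (Gp n G) (fun _ => (1 : ℤ)) s i ≤ ((SBF (n := n) (G := G)).card : ℤ) := h
  _ ≤ ((n + n ^ 2 : ℕ) : ℤ) := by exact_mod_cast h2
  _ = (n : ℤ) + n ^ 2 := by push_cast; ring

/-- The `b`-player deviating to a leaf of `b`. -/
lemma dev_bplayer_bleaf (hinj : Function.Injective s)
    (hbfree : ∀ j, s j ≠ pB)
    (hw : ∃ p w, p ≠ i ∧ s p = pV w)
    (hsi : ∃ l, s i = pBL l) :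
    utility (Gp n G) (fun _ => (1 : ℤ)) s i ≤ 1 := by
  obtain ⟨p, w₀, hpi, hp⟩ := hw
  have h := utility_le_master {s i} {v | v = pB}
    (Finset.mem_singleton_self _)
    (by
      intro u hu v hadj
      rw [Finset.mem_singleton] at hu
      subst hu
      obtain ⟨l, hl⟩ := hsi
      rw [hl] at hadj
      exact Or.inr (nbr_pBL hadj.symm))
    (by
      rintro v rfl
      exact shield_witness hinj hbfree (adj_pV_pB w₀) hpi hp)
  simpa using h

lemma no_cross {x : Fin 4 ⊕ (Fin n ⊕ Fin n)}
    {y : Fin n ⊕ (G.edgeSet ⊕ ((Σ v : Fin n, Fin (n - G.degree v)) ⊕ (Unit ⊕ Fin (n ^ 3))))} :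
    ¬ (Gp n G).Adj (Sum.inl x) (Sum.inr y) := by
  rw [Gp, SimpleGraph.fromRel_adj]
  rintro ⟨-, h | h⟩ <;>
  · rcases x with i | l | l <;> rcases y with w | e | ⟨w, l'⟩ | ⟨⟩ | l' <;>
      simp_all [relGp]

lemma inr_mem_SBallF {x : Fin n ⊕ (G.edgeSet ⊕ ((Σ v : Fin n, Fin (n - G.degree v)) ⊕
    (Unit ⊕ Fin (n ^ 3))))} : (Sum.inr x : VGp n G) ∈ SBallF := by
  rw [mem_SBallF]
  rcases x with w | e | y | ⟨⟩ | l
  · exact Or.inl ⟨w, rfl⟩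
  · exact Or.inr (Or.inl ⟨e, rfl⟩)
  · exact Or.inr (Or.inr (Or.inl ⟨y, rfl⟩))
  · exact Or.inr (Or.inr (Or.inr (Or.inl rfl)))
  · exact Or.inr (Or.inr (Or.inr (Or.inr ⟨l, rfl⟩)))

/-- Any player placed in the `B` component dominates at most all of `B`. -/
lemma dev_Bcomp (hsi : ∃ x, s i = Sum.inr x) :
    utility (Gp n G) (fun _ => (1 : ℤ)) s i ≤ ((SBallF (n := n) (G := G)).card : ℤ) := by
  refine utility_le_master (SBallF (n := n) (G := G)) ∅ ?_ ?_ (by rintro v ⟨⟩)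
  · obtain ⟨x, hx⟩ := hsi
    rw [hx]
    exact inr_mem_SBallF
  · intro x hx v hadj
    rw [mem_SBallF] at hx
    have hxr : ∃ y, x = Sum.inr y := by
      rcases hx with ⟨w, rfl⟩ | ⟨e, rfl⟩ | ⟨y, rfl⟩ | rfl | ⟨l, rfl⟩ <;> exact ⟨_, rfl⟩
    obtain ⟨y, rfl⟩ := hxr
    rcases v with z | z
    · exact absurd hadj.symm no_cross
    · exact Or.inl inr_mem_SBallF

end Dev

section FinalHelpers

variable {V : Type*} {κ : ℕ} (G : SimpleGraph V) (s : Fin κ → V) [Fintype V]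

lemma final_of_init {v : V} {x : Option (Fin κ)} (h : initLabel s v = some x) :
    finalLabel G s v = some x :=
  iterate_of_some G h _

lemma final_of_step1 (hpos : 0 < Fintype.card V) {v : V} {x : Option (Fin κ)}
    (h : stepLabel G (initLabel s) v = some x) : finalLabel G s v = some x := by
  obtain ⟨m, hm⟩ : ∃ m, Fintype.card V = m + 1 := ⟨Fintype.card V - 1, by omega⟩
  rw [finalLabel, hm, Function.iterate_succ_apply]
  exact iterate_of_some G h m

lemma final_of_step2 (h2 : 2 ≤ Fintype.card V) {v : V} {x : Option (Fin κ)}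
    (h : stepLabel G (fun u => stepLabel G (initLabel s) u) v = some x) :
    finalLabel G s v = some x := by
  obtain ⟨m, hm⟩ : ∃ m, Fintype.card V = m + 2 := ⟨Fintype.card V - 2, by omega⟩
  rw [finalLabel, hm, Function.iterate_succ_apply, Function.iterate_succ_apply]
  exact iterate_of_some G h m

end FinalHelpers

section Prof

variable {n kk : ℕ} {G : SimpleGraph (Fin n)} [DecidableRel G.Adj] {f : Fin kk → Fin n}

lemma prof_val_lt {i : Fin (kk + 3)} (h : (i : ℕ) < kk) :
    profGp n G kk f i = pV (f ⟨i, h⟩) := by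
  rw [profGp, dif_pos h]

lemma prof_val_k {i : Fin (kk + 3)} (h : (i : ℕ) = kk) :
    profGp n G kk f i = pB := by
  rw [profGp, dif_neg (by omega), if_pos h]

lemma prof_val_k1 {i : Fin (kk + 3)} (h : (i : ℕ) = kk + 1) :
    profGp n G kk f i = pA 1 := by
  rw [profGp, dif_neg (by omega), if_neg (by omega), if_pos h]

lemma prof_val_k2 {i : Fin (kk + 3)} (h : (i : ℕ) = kk + 2) :
    profGp n G kk f i = pA 2 := by
  rw [profGp, dif_neg (by omega), if_neg (by omega), if_neg (by omega)]

lemma prof_cases (j : Fin (kk + 3)) :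
    (∃ h : (j : ℕ) < kk, profGp n G kk f j = pV (f ⟨j, h⟩)) ∨
      ((j : ℕ) = kk ∧ profGp n G kk f j = pB) ∨
      ((j : ℕ) = kk + 1 ∧ profGp n G kk f j = pA 1) ∨
      ((j : ℕ) = kk + 2 ∧ profGp n G kk f j = pA 2) := by
  have hj := j.isLt
  by_cases h1 : (j : ℕ) < kk
  · exact Or.inl ⟨h1, prof_val_lt h1⟩
  by_cases h2 : (j : ℕ) = kk
  · exact Or.inr (Or.inl ⟨h2, prof_val_k h2⟩)
  by_cases h3 : (j : ℕ) = kk + 1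
  · exact Or.inr (Or.inr (Or.inl ⟨h3, prof_val_k1 h3⟩))
  · have h4 : (j : ℕ) = kk + 2 := by omega
    exact Or.inr (Or.inr (Or.inr ⟨h4, prof_val_k2 h4⟩))

lemma prof_inj (hf : Function.Injective f) :
    Function.Injective (profGp n G kk f) := by
  intro a b hab
  rcases prof_cases (G := G) (f := f) a with ⟨ha, ea⟩ | ⟨ha, ea⟩ | ⟨ha, ea⟩ | ⟨ha, ea⟩ <;>
    rcases prof_cases (G := G) (f := f) b with ⟨hb, eb⟩ | ⟨hb, eb⟩ | ⟨hb, eb⟩ | ⟨hb, eb⟩ <;>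
    rw [ea, eb] at hab <;> first
      | (apply Fin.ext; omega)
      | simp_all
  · -- both original vertices
    have : f ⟨a, ha⟩ = f ⟨b, hb⟩ := by simpa using hab
    have := hf this
    apply Fin.ext
    simpa using congrArg Fin.val this

/-- no seed of the standard profile lies on various vertex classes -/
lemma prof_ne_pE (j : Fin (kk + 3)) (e : G.edgeSet) : profGp n G kk f j ≠ pE e := by
  rcases prof_cases (G := G) (f := f) j with ⟨h, e'⟩ | ⟨h, e'⟩ | ⟨h, e'⟩ | ⟨h, e'⟩ <;> simp [e']

lemma prof_ne_pVL (j : Fin (kk + 3)) (x : Σ v : Fin n, Fin (n - G.degree v)) :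
    profGp n G kk f j ≠ pVL x := by
  rcases prof_cases (G := G) (f := f) j with ⟨h, e'⟩ | ⟨h, e'⟩ | ⟨h, e'⟩ | ⟨h, e'⟩ <;> simp [e']

lemma prof_ne_pBL (j : Fin (kk + 3)) (l : Fin (n ^ 3)) :
    profGp n G kk f j ≠ pBL l := by
  rcases prof_cases (G := G) (f := f) j with ⟨h, e'⟩ | ⟨h, e'⟩ | ⟨h, e'⟩ | ⟨h, e'⟩ <;> simp [e']

lemma prof_ne_pL1 (j : Fin (kk + 3)) (l : Fin n) : profGp n G kk f j ≠ pL1 l := by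
  rcases prof_cases (G := G) (f := f) j with ⟨h, e'⟩ | ⟨h, e'⟩ | ⟨h, e'⟩ | ⟨h, e'⟩ <;> simp [e']

lemma prof_ne_pL4 (j : Fin (kk + 3)) (l : Fin n) : profGp n G kk f j ≠ pL4 l := by
  rcases prof_cases (G := G) (f := f) j with ⟨h, e'⟩ | ⟨h, e'⟩ | ⟨h, e'⟩ | ⟨h, e'⟩ <;> simp [e']

lemma prof_ne_pA0 (j : Fin (kk + 3)) : profGp n G kk f j ≠ pA 0 := by
  rcases prof_cases (G := G) (f := f) j with ⟨h, e'⟩ | ⟨h, e'⟩ | ⟨h, e'⟩ | ⟨h, e'⟩ <;> simp [e']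

lemma prof_ne_pA3 (j : Fin (kk + 3)) : profGp n G kk f j ≠ pA 3 := by
  rcases prof_cases (G := G) (f := f) j with ⟨h, e'⟩ | ⟨h, e'⟩ | ⟨h, e'⟩ | ⟨h, e'⟩ <;> simp [e']

lemma prof_eq_pB {j : Fin (kk + 3)} (h : profGp n G kk f j = pB) : (j : ℕ) = kk := by
  rcases prof_cases (G := G) (f := f) j with ⟨h', e'⟩ | ⟨h', e'⟩ | ⟨h', e'⟩ | ⟨h', e'⟩ <;>
    rw [e'] at h <;> simp_all

lemma prof_eq_pV {j : Fin (kk + 3)} {w : Fin n} (h : profGp n G kk f j = pV w) :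
    ∃ h' : (j : ℕ) < kk, f ⟨j, h'⟩ = w := by
  rcases prof_cases (G := G) (f := f) j with ⟨h', e'⟩ | ⟨h', e'⟩ | ⟨h', e'⟩ | ⟨h', e'⟩ <;>
    rw [e'] at h <;> simp_all

lemma prof_eq_pA1 {j : Fin (kk + 3)} (h : profGp n G kk f j = pA 1) : (j : ℕ) = kk + 1 := by
  rcases prof_cases (G := G) (f := f) j with ⟨h', e'⟩ | ⟨h', e'⟩ | ⟨h', e'⟩ | ⟨h', e'⟩ <;>
    rw [e'] at h <;> simp_all <;> exact absurd h (by decide)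

lemma prof_eq_pA2 {j : Fin (kk + 3)} (h : profGp n G kk f j = pA 2) : (j : ℕ) = kk + 2 := by
  rcases prof_cases (G := G) (f := f) j with ⟨h', e'⟩ | ⟨h', e'⟩ | ⟨h', e'⟩ | ⟨h', e'⟩ <;>
    rw [e'] at h <;> simp_all <;> exact absurd h (by decide)

end Prof

section Eq

variable {n kk : ℕ} {G : SimpleGraph (Fin n)} [DecidableRel G.Adj] {f : Fin kk → Fin n}
  {I : Finset (Fin n)}

lemma eq_I (hf : Function.Injective f) (hfI : ∀ j, f j ∈ I)
    (hI : ∀ u ∈ I, ∀ v ∈ I, ¬ G.Adj u v) {i : Fin (kk + 3)} (hik : (i : ℕ) < kk) :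
    ((n : ℤ) + 1) ≤ utility (Gp n G) (fun _ => (1 : ℤ)) (profGp n G kk f) i := by
  set s := profGp n G kk f with hs
  have hinj : Function.Injective s := prof_inj hf
  have hseed : initLabel s (pV (f ⟨i, hik⟩)) = some (some i) := by
    have := initLabel_seed hinj i
    rwa [hs, prof_val_lt hik] at this
  have hkey : ∀ v ∈ SorigF (G := G) (f ⟨i, hik⟩),
      finalLabel (Gp n G) s v = some (some i) := by
    intro v hv
    rw [mem_SorigF] at hv
    rcases hv with rfl | ⟨e, he, rfl⟩ | ⟨l, rfl⟩
    · exact final_of_init _ _ hseed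
    · refine final_of_step1 _ _ pos_VGp ?_
      refine stepLabel_unique _ (initLabel_of_not_mem s (fun j => prof_ne_pE j e))
        (adj_pV_pE he) hseed ?_
      intro j u' hadj hlab
      obtain ⟨w, hw, rfl⟩ := nbr_pE hadj
      have hsj : s j = pV w := initLabel_player s hlab
      obtain ⟨hj, hfj⟩ := prof_eq_pV hsj
      by_cases hwu : w = f ⟨i, hik⟩
      · refine hinj ?_
        rw [hsj, hwu, hs, prof_val_lt hik]
      · exfalso
        have he2 : (e : Sym2 (Fin n)) = s(w, f ⟨i, hik⟩) :=
          (Sym2.mem_and_mem_iff hwu).mp ⟨hw, he⟩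
        have hadj2 : G.Adj w (f ⟨i, hik⟩) := by
          have := e.2
          rw [he2] at this
          exact this
        exact hI w (hfj ▸ hfI ⟨j, hj⟩) _ (hfI ⟨i, hik⟩) hadj2
    · refine final_of_step1 _ _ pos_VGp ?_
      refine stepLabel_unique _ (initLabel_of_not_mem s (fun j => prof_ne_pVL j _))
        (adj_pV_pVL ⟨f ⟨i, hik⟩, l⟩) hseed ?_
      intro j u' hadj hlab
      have hu' := nbr_pVL hadj
      subst hu'
      have hsj : s j = pV (f ⟨i, hik⟩) := initLabel_player s hlab
      refine hinj ?_
      rw [hsj, hs, prof_val_lt hik]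
  have h := card_le_utility (Gp n G) s (SorigF (G := G) (f ⟨i, hik⟩)) hkey
  rw [card_SorigF (G := G)] at h
  exact le_trans (by push_cast; omega) h

lemma eq_b (hf : Function.Injective f) :
    (1 + (n : ℤ) ^ 3) ≤ utility (Gp n G) (fun _ => (1 : ℤ)) (profGp n G kk f)
      ⟨kk, by omega⟩ := by
  set s := profGp n G kk f with hs
  have hinj : Function.Injective s := prof_inj hf
  have hseed : initLabel s pB = some (some (⟨kk, by omega⟩ : Fin (kk + 3))) := by
    have := initLabel_seed hinj ⟨kk, by omega⟩
    rwa [hs, prof_val_k rfl] at this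
  have hkey : ∀ v ∈ SBLF (n := n) (G := G),
      finalLabel (Gp n G) s v = some (some (⟨kk, by omega⟩ : Fin (kk + 3))) := by
    intro v hv
    rw [mem_SBLF] at hv
    rcases hv with rfl | ⟨l, rfl⟩
    · exact final_of_init _ _ hseed
    · refine final_of_step1 _ _ pos_VGp ?_
      refine stepLabel_unique _ (initLabel_of_not_mem s (fun j => prof_ne_pBL j l))
        (adj_pB_pBL l) hseed ?_
      intro j u' hadj hlab
      have hu' := nbr_pBL hadj
      subst hu'
      have hsj := prof_eq_pB (initLabel_player s hlab)
      exact Fin.ext hsj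
  have h := card_le_utility (Gp n G) s (SBLF (n := n) (G := G)) hkey
  rw [card_SBLF (n := n) (G := G)] at h
  exact le_trans (by push_cast; omega) h

lemma eq_a2 (hf : Function.Injective f) :
    ((n : ℤ) + 2) ≤ utility (Gp n G) (fun _ => (1 : ℤ)) (profGp n G kk f)
      ⟨kk + 1, by omega⟩ := by
  set s := profGp n G kk f with hs
  have hinj : Function.Injective s := prof_inj hf
  set a2I : Fin (kk + 3) := ⟨kk + 1, by omega⟩ with ha2I
  have hseed : initLabel s (pA 1) = some (some a2I) := by
    have := initLabel_seed hinj a2I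
    rwa [hs, prof_val_k1 rfl] at this
  have hA0 : stepLabel (Gp n G) (initLabel s) (pA 0) = some (some a2I) := by
    refine stepLabel_unique _ (initLabel_of_not_mem s (fun j => prof_ne_pA0 j))
      ((adj_pA (i := 0) (i' := 1) (by decide)).symm) hseed ?_
    intro j u' hadj hlab
    rcases nbr_pA hadj with ⟨i', hi', rfl⟩ | ⟨h0', l, rfl⟩ | ⟨h3', l, rfl⟩
    · have : i' = 1 := by fin_cases i' <;> simp_all
      subst this
      have hsj : s j = pA 1 := initLabel_player s hlab
      refine hinj ?_
      rw [hsj, hs, prof_val_k1 rfl]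
    · exact absurd (initLabel_player s hlab) (prof_ne_pL1 j l)
    · exact absurd h3' (by decide)
  have hkey : ∀ v ∈ insert (pA 1) (SA1F (n := n) (G := G)),
      finalLabel (Gp n G) s v = some (some a2I) := by
    intro v hv
    rw [Finset.mem_insert, mem_SA1F] at hv
    rcases hv with rfl | rfl | ⟨l, rfl⟩
    · exact final_of_init _ _ hseed
    · exact final_of_step1 _ _ pos_VGp hA0
    · refine final_of_step2 _ _ card_VGp_ge ?_
      have h0 : stepLabel (Gp n G) (initLabel s) (pL1 l) = none := by
        refine stepLabel_of_no_witness _ (initLabel_of_not_mem s (fun j => prof_ne_pL1 j l)) ?_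
        intro u j hadj hlab
        have hu := nbr_pL1 hadj
        subst hu
        rw [initLabel_of_not_mem s (fun j => prof_ne_pA0 j)] at hlab
        simp at hlab
      refine stepLabel_unique _ h0 (adj_pA0_pL1 l) hA0 ?_
      intro j u' hadj hlab
      have hu' := nbr_pL1 hadj
      subst hu'
      rw [hA0] at hlab
      exact (Option.some_injective _ (Option.some_injective _ hlab)).symm
  have h := card_le_utility (Gp n G) s (insert (pA 1) (SA1F (n := n) (G := G))) hkey
  have hcard : (insert (pA 1) (SA1F (n := n) (G := G))).card = n + 2 := by
    rw [Finset.card_insert_of_notMem, card_SA1F (n := n) (G := G)]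
    rw [mem_SA1F]
    rintro (h | ⟨l, h⟩) <;> simp at h
  rw [hcard] at h
  exact le_trans (by push_cast; omega) h

lemma eq_a3 (hf : Function.Injective f) :
    ((n : ℤ) + 2) ≤ utility (Gp n G) (fun _ => (1 : ℤ)) (profGp n G kk f)
      ⟨kk + 2, by omega⟩ := by
  set s := profGp n G kk f with hs
  have hinj : Function.Injective s := prof_inj hf
  set a3I : Fin (kk + 3) := ⟨kk + 2, by omega⟩ with ha3I
  have hseed : initLabel s (pA 2) = some (some a3I) := by
    have := initLabel_seed hinj a3I
    rwa [hs, prof_val_k2 rfl] at this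
  have hA3 : stepLabel (Gp n G) (initLabel s) (pA 3) = some (some a3I) := by
    refine stepLabel_unique _ (initLabel_of_not_mem s (fun j => prof_ne_pA3 j))
      (adj_pA (i := 2) (i' := 3) (by decide)) hseed ?_
    intro j u' hadj hlab
    rcases nbr_pA hadj with ⟨i', hi', rfl⟩ | ⟨h0', l, rfl⟩ | ⟨h3', l, rfl⟩
    · have : i' = 2 := by fin_cases i' <;> simp_all <;> omega
      subst this
      have hsj : s j = pA 2 := initLabel_player s hlab
      refine hinj ?_
      rw [hsj, hs, prof_val_k2 rfl]
    · exact absurd h0' (by decide)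
    · exact absurd (initLabel_player s hlab) (prof_ne_pL4 j l)
  have hkey : ∀ v ∈ insert (pA 2) (SA4F (n := n) (G := G)),
      finalLabel (Gp n G) s v = some (some a3I) := by
    intro v hv
    rw [Finset.mem_insert, mem_SA4F] at hv
    rcases hv with rfl | rfl | ⟨l, rfl⟩
    · exact final_of_init _ _ hseed
    · exact final_of_step1 _ _ pos_VGp hA3
    · refine final_of_step2 _ _ card_VGp_ge ?_
      have h0 : stepLabel (Gp n G) (initLabel s) (pL4 l) = none := by
        refine stepLabel_of_no_witness _ (initLabel_of_not_mem s (fun j => prof_ne_pL4 j l)) ?_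
        intro u j hadj hlab
        have hu := nbr_pL4 hadj
        subst hu
        rw [initLabel_of_not_mem s (fun j => prof_ne_pA3 j)] at hlab
        simp at hlab
      refine stepLabel_unique _ h0 (adj_pA3_pL4 l) hA3 ?_
      intro j u' hadj hlab
      have hu' := nbr_pL4 hadj
      subst hu'
      rw [hA3] at hlab
      exact (Option.some_injective _ (Option.some_injective _ hlab)).symm
  have h := card_le_utility (Gp n G) s (insert (pA 2) (SA4F (n := n) (G := G))) hkey
  have hcard : (insert (pA 2) (SA4F (n := n) (G := G))).card = n + 2 := by
    rw [Finset.card_insert_of_notMem, card_SA4F (n := n) (G := G)]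
    rw [mem_SA4F]
    rintro (h | ⟨l, h⟩) <;> simp at h
  rw [hcard] at h
  exact le_trans (by push_cast; omega) h

lemma eq_b0 (hf : Function.Injective f) (hk : kk = 0) :
    ((SBallF (n := n) (G := G)).card : ℤ) ≤
      utility (Gp n G) (fun _ => (1 : ℤ)) (profGp n G kk f) ⟨kk, by omega⟩ := by
  set s := profGp n G kk f with hs
  have hinj : Function.Injective s := prof_inj hf
  set bI : Fin (kk + 3) := ⟨kk, by omega⟩ with hbI
  have hseed : initLabel s pB = some (some bI) := by
    have := initLabel_seed hinj bI
    rwa [hs, prof_val_k rfl] at this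
  have hfree : ∀ w : Fin n, ∀ j, s j ≠ pV w := by
    intro w j hj
    obtain ⟨h', -⟩ := prof_eq_pV hj
    omega
  have hpv : ∀ w : Fin n, stepLabel (Gp n G) (initLabel s) (pV w) = some (some bI) := by
    intro w
    refine stepLabel_unique _ (initLabel_of_not_mem s (hfree w))
      (adj_pV_pB w).symm hseed ?_
    intro j u' hadj hlab
    rcases nbr_pV hadj with rfl | ⟨e, he, rfl⟩ | ⟨y, hy, rfl⟩
    · exact Fin.ext (prof_eq_pB (initLabel_player s hlab))
    · exact absurd (initLabel_player s hlab) (prof_ne_pE j e)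
    · exact absurd (initLabel_player s hlab) (prof_ne_pVL j y)
  have hkey : ∀ v ∈ SBallF (n := n) (G := G),
      finalLabel (Gp n G) s v = some (some bI) := by
    intro v hv
    rw [mem_SBallF] at hv
    rcases hv with ⟨w, rfl⟩ | ⟨e, rfl⟩ | ⟨x, rfl⟩ | rfl | ⟨l, rfl⟩
    · exact final_of_step1 _ _ pos_VGp (hpv w)
    · refine final_of_step2 _ _ card_VGp_ge ?_
      have h0 : stepLabel (Gp n G) (initLabel s) (pE e) = none := by
        refine stepLabel_of_no_witness _
          (initLabel_of_not_mem s (fun j => prof_ne_pE j e)) ?_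
        intro u j hadj hlab
        obtain ⟨w, -, rfl⟩ := nbr_pE hadj
        rw [initLabel_of_not_mem s (hfree w)] at hlab
        simp at hlab
      refine stepLabel_unique _ h0
        (adj_pV_pE (Sym2.out_fst_mem (e : Sym2 (Fin n)))) (hpv _) ?_
      intro j u' hadj hlab
      obtain ⟨w, -, rfl⟩ := nbr_pE hadj
      rw [hpv w] at hlab
      exact (Option.some_injective _ (Option.some_injective _ hlab)).symm
    · refine final_of_step2 _ _ card_VGp_ge ?_
      have h0 : stepLabel (Gp n G) (initLabel s) (pVL x) = none := by
        refine stepLabel_of_no_witness _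
          (initLabel_of_not_mem s (fun j => prof_ne_pVL j x)) ?_
        intro u j hadj hlab
        have hu := nbr_pVL hadj
        subst hu
        rw [initLabel_of_not_mem s (hfree x.1)] at hlab
        simp at hlab
      refine stepLabel_unique _ h0 (adj_pV_pVL x) (hpv _) ?_
      intro j u' hadj hlab
      have hu' := nbr_pVL hadj
      subst hu'
      rw [hpv x.1] at hlab
      exact (Option.some_injective _ (Option.some_injective _ hlab)).symm
    · exact final_of_init _ _ hseed
    · refine final_of_step1 _ _ pos_VGp ?_
      refine stepLabel_unique _ (initLabel_of_not_mem s (fun j => prof_ne_pBL j l))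
        (adj_pB_pBL l) hseed ?_
      intro j u' hadj hlab
      have hu' := nbr_pBL hadj
      subst hu'
      exact Fin.ext (prof_eq_pB (initLabel_player s hlab))
  exact card_le_utility (Gp n G) s (SBallF (n := n) (G := G)) hkey

end Eq

set_option maxHeartbeats 4000000 in
theorem Gp_independent_to_nash' (n k : ℕ) (G : SimpleGraph (Fin n))
    [DecidableRel G.Adj] (I : Finset (Fin n))
    (hI : ∀ u ∈ I, ∀ v ∈ I, ¬ G.Adj u v) (hcard : k ≤ I.card) :
    ∃ f : Fin k → Fin n, Function.Injective f ∧ (∀ i, f i ∈ I) ∧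
      ∀ (i : Fin (k + 3)) (v' : VGp n G),
        utility (Gp n G) (fun _ => (1 : ℤ)) (Function.update (profGp n G k f) i v') i ≤
          utility (Gp n G) (fun _ => (1 : ℤ)) (profGp n G k f) i := by
  obtain ⟨J, hJI, hJcard⟩ := Finset.exists_subset_card_eq hcard
  refine ⟨fun i => J.orderEmbOfFin hJcard i, fun a b h => (J.orderEmbOfFin hJcard).injective h,
    fun i => hJI (J.orderEmbOfFin_mem hJcard i), ?_⟩
  set f : Fin k → Fin n := fun i => J.orderEmbOfFin hJcard i with hfdef
  have hf : Function.Injective f := fun a b h => (J.orderEmbOfFin hJcard).injective h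
  have hfI : ∀ i, f i ∈ I := fun i => hJI (J.orderEmbOfFin_mem hJcard i)
  intro i v'
  set s := profGp n G k f with hs
  have hinj : Function.Injective s := prof_inj hf
  have hsbI : s ⟨k, by omega⟩ = pB := prof_val_k rfl
  have hsa2 : s ⟨k + 1, by omega⟩ = pA 1 := prof_val_k1 rfl
  have hsa3 : s ⟨k + 2, by omega⟩ = pA 2 := prof_val_k2 rfl
  by_cases hself : v' = s i
  · rw [hself, Function.update_eq_self]
  by_cases hocc : ∃ j, s j = v'
  · obtain ⟨j, hj⟩ := hocc
    have hji : j ≠ i := by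
      rintro rfl
      exact hself hj.symm
    have hcol : Function.update s i v' j = Function.update s i v' i := by
      rw [Function.update_of_ne hji, Function.update_self, hj]
    rw [utility_collision (Gp n G) (Function.update s i v') hji hcol]
    exact utility_nonneg _ _ i
  push_neg at hocc
  have hinj' : Function.Injective (Function.update s i v') := by
    intro a b hab
    by_cases ha : a = i <;> by_cases hb : b = i
    · rw [ha, hb]
    · subst ha
      rw [Function.update_self, Function.update_of_ne hb] at hab
      exact absurd hab.symm (hocc b)
    · subst hb
      rw [Function.update_self, Function.update_of_ne ha] at hab
      exact absurd hab (hocc a)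
    · rw [Function.update_of_ne ha, Function.update_of_ne hb] at hab
      exact hinj hab
  have hsi' : Function.update s i v' i = v' := Function.update_self i v' s
  have hupd : ∀ j, j ≠ i → Function.update s i v' j = s j :=
    fun j hj => Function.update_of_ne hj _ _
  have hn0 : (0 : ℤ) ≤ (n : ℤ) := Int.natCast_nonneg n
  have hn3 : (n : ℤ) + 1 ≤ 1 + (n : ℤ) ^ 3 := by
    have : n ≤ n ^ 3 := Nat.le_self_pow (by norm_num) n
    have := (Nat.cast_le (α := ℤ)).mpr this
    linarith
  have hnn : (n : ℤ) + (n : ℤ) ^ 2 ≤ 1 + (n : ℤ) ^ 3 := by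
    have := nnpow (n := n)
    exact_mod_cast this
  -- helper: b is seeded by the player with index k in the deviated profile (if i ≠ that index)
  have hi4 := i.isLt
  by_cases hik : (i : ℕ) < k
  · -- deviator is an original-vertex player
    have hLB := eq_I (G := G) hf hfI hI hik
    have hbne : (⟨k, by omega⟩ : Fin (k + 3)) ≠ i := Fin.ne_of_val_ne (show k ≠ (i : ℕ) by omega)
    have ha2ne : (⟨k + 1, by omega⟩ : Fin (k + 3)) ≠ i := Fin.ne_of_val_ne (show k + 1 ≠ (i : ℕ) by omega)
    have ha3ne : (⟨k + 2, by omega⟩ : Fin (k + 3)) ≠ i := Fin.ne_of_val_ne (show k + 2 ≠ (i : ℕ) by omega)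
    have hb : ∃ p, p ≠ i ∧ Function.update s i v' p = pB :=
      ⟨⟨k, by omega⟩, hbne, by rw [hupd _ hbne]; exact hsbI⟩
    have ha2 : ∃ p, p ≠ i ∧ Function.update s i v' p = pA 1 :=
      ⟨⟨k + 1, by omega⟩, ha2ne, by rw [hupd _ ha2ne]; exact hsa2⟩
    have ha3 : ∃ p, p ≠ i ∧ Function.update s i v' p = pA 2 :=
      ⟨⟨k + 2, by omega⟩, ha3ne, by rw [hupd _ ha3ne]; exact hsa3⟩
    rcases v' with (j4 | l | l) | (w | e | x | ⟨⟩ | l)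
    · fin_cases j4
      · exact le_trans (dev_a1 hinj' (Or.inl hsi') (Or.inl ha2)) hLB
      · exact absurd hsa2 (hocc _)
      · exact absurd hsa3 (hocc _)
      · exact le_trans (dev_a4 hinj' (Or.inl hsi') (Or.inl ha3)) hLB
    · exact le_trans (dev_a1 hinj' (Or.inr ⟨l, hsi'⟩) (Or.inl ha2)) hLB
    · exact le_trans (dev_a4 hinj' (Or.inr ⟨l, hsi'⟩) (Or.inl ha3)) hLB
    · exact le_trans (dev_orig hinj' hb hsi') hLB
    · exact le_trans (dev_small hinj' hb (Or.inl ⟨e, hsi'⟩)) (le_trans (by linarith) hLB)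
    · exact le_trans (dev_small hinj' hb (Or.inr (Or.inl ⟨x, hsi'⟩)))
        (le_trans (by linarith) hLB)
    · exact absurd hsbI (hocc _)
    · exact le_trans (dev_small hinj' hb (Or.inr (Or.inr ⟨l, hsi'⟩)))
        (le_trans (by linarith) hLB)
  by_cases hikk : (i : ℕ) = k
  · -- deviator is the b-player
    have hieq : i = ⟨k, by omega⟩ := Fin.ext hikk
    have hLB : 1 + (n : ℤ) ^ 3 ≤ utility (Gp n G) (fun _ => (1 : ℤ)) s i := by
      rw [hieq]
      exact eq_b hf
    have ha2ne : (⟨k + 1, by omega⟩ : Fin (k + 3)) ≠ i := Fin.ne_of_val_ne (show k + 1 ≠ (i : ℕ) by omega)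
    have ha3ne : (⟨k + 2, by omega⟩ : Fin (k + 3)) ≠ i := Fin.ne_of_val_ne (show k + 2 ≠ (i : ℕ) by omega)
    have ha2 : ∃ p, p ≠ i ∧ Function.update s i v' p = pA 1 :=
      ⟨⟨k + 1, by omega⟩, ha2ne, by rw [hupd _ ha2ne]; exact hsa2⟩
    have ha3 : ∃ p, p ≠ i ∧ Function.update s i v' p = pA 2 :=
      ⟨⟨k + 2, by omega⟩, ha3ne, by rw [hupd _ ha3ne]; exact hsa3⟩
    have hbfree : v' ≠ pB → ∀ j, Function.update s i v' j ≠ pB := by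
      intro hv' j hj
      by_cases hji : j = i
      · subst hji
        rw [hsi'] at hj
        exact hv' hj
      · rw [hupd _ hji] at hj
        exact hji (Fin.ext (by rw [prof_eq_pB hj]; omega))
    by_cases hk0 : k = 0
    · -- no original players: deviation inside B is bounded by the whole of B
      have hLB0 : ((SBallF (n := n) (G := G)).card : ℤ) ≤
          utility (Gp n G) (fun _ => (1 : ℤ)) s i := by
        rw [hieq]
        exact eq_b0 hf hk0
      rcases v' with (j4 | l | l) | (w | e | x | ⟨⟩ | l)
      · fin_cases j4
        · exact le_trans (dev_a1 hinj' (Or.inl hsi') (Or.inl ha2)) (le_trans hn3 hLB)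
        · exact absurd hsa2 (hocc _)
        · exact absurd hsa3 (hocc _)
        · exact le_trans (dev_a4 hinj' (Or.inl hsi') (Or.inl ha3)) (le_trans hn3 hLB)
      · exact le_trans (dev_a1 hinj' (Or.inr ⟨l, hsi'⟩) (Or.inl ha2)) (le_trans hn3 hLB)
      · exact le_trans (dev_a4 hinj' (Or.inr ⟨l, hsi'⟩) (Or.inl ha3)) (le_trans hn3 hLB)
      · exact le_trans (dev_Bcomp ⟨_, hsi'⟩) hLB0
      · exact le_trans (dev_Bcomp ⟨_, hsi'⟩) hLB0
      · exact le_trans (dev_Bcomp ⟨_, hsi'⟩) hLB0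
      · exact absurd hsbI (hocc _)
      · exact le_trans (dev_Bcomp ⟨_, hsi'⟩) hLB0
    · -- k ≥ 1 : there is an original player, who shields b after the deviation
      have h0ne : (⟨0, by omega⟩ : Fin (k + 3)) ≠ i := Fin.ne_of_val_ne (show 0 ≠ (i : ℕ) by omega)
      have hw : ∃ p w, p ≠ i ∧ Function.update s i v' p = pV w := by
        refine ⟨⟨0, by omega⟩, f ⟨0, by omega⟩, h0ne, ?_⟩
        rw [hupd _ h0ne]
        exact prof_val_lt (show 0 < k by omega)
      rcases v' with (j4 | l | l) | (w | e | x | ⟨⟩ | l)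
      · fin_cases j4
        · exact le_trans (dev_a1 hinj' (Or.inl hsi') (Or.inl ha2)) (le_trans hn3 hLB)
        · exact absurd hsa2 (hocc _)
        · exact absurd hsa3 (hocc _)
        · exact le_trans (dev_a4 hinj' (Or.inl hsi') (Or.inl ha3)) (le_trans hn3 hLB)
      · exact le_trans (dev_a1 hinj' (Or.inr ⟨l, hsi'⟩) (Or.inl ha2)) (le_trans hn3 hLB)
      · exact le_trans (dev_a4 hinj' (Or.inr ⟨l, hsi'⟩) (Or.inl ha3)) (le_trans hn3 hLB)
      · refine le_trans (dev_bplayer_B hinj' (hbfree (by simp)) hw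
          (Or.inl ⟨w, hsi'⟩)) (le_trans hnn hLB)
      · refine le_trans (dev_bplayer_B hinj' (hbfree (by simp)) hw
          (Or.inr (Or.inl ⟨e, hsi'⟩))) (le_trans hnn hLB)
      · refine le_trans (dev_bplayer_B hinj' (hbfree (by simp)) hw
          (Or.inr (Or.inr ⟨x, hsi'⟩))) (le_trans hnn hLB)
      · exact absurd hsbI (hocc _)
      · refine le_trans (dev_bplayer_bleaf hinj' (hbfree (by simp)) hw
          ⟨l, hsi'⟩) (le_trans (by linarith [sq_nonneg ((n : ℤ))]) hLB)
  by_cases hikk1 : (i : ℕ) = k + 1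
  · -- deviator is the a₂-player
    have hieq : i = ⟨k + 1, by omega⟩ := Fin.ext hikk1
    have hLB : (n : ℤ) + 2 ≤ utility (Gp n G) (fun _ => (1 : ℤ)) s i := by
      rw [hieq]
      exact eq_a2 hf
    have hbne : (⟨k, by omega⟩ : Fin (k + 3)) ≠ i := Fin.ne_of_val_ne (show k ≠ (i : ℕ) by omega)
    have ha3ne : (⟨k + 2, by omega⟩ : Fin (k + 3)) ≠ i := Fin.ne_of_val_ne (show k + 2 ≠ (i : ℕ) by omega)
    have hb : ∃ p, p ≠ i ∧ Function.update s i v' p = pB :=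
      ⟨⟨k, by omega⟩, hbne, by rw [hupd _ hbne]; exact hsbI⟩
    have ha3 : ∃ p, p ≠ i ∧ Function.update s i v' p = pA 2 :=
      ⟨⟨k + 2, by omega⟩, ha3ne, by rw [hupd _ ha3ne]; exact hsa3⟩
    have ha1free : (v' ≠ pA 1) → ∀ j, Function.update s i v' j ≠ pA 1 := by
      intro hv' j hj
      by_cases hji : j = i
      · subst hji
        rw [hsi'] at hj
        exact hv' hj
      · rw [hupd _ hji] at hj
        exact hji (Fin.ext (by rw [prof_eq_pA1 hj]; omega))
    rcases v' with (j4 | l | l) | (w | e | x | ⟨⟩ | l)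
    · fin_cases j4
      · refine le_trans (dev_a1 hinj' (Or.inl hsi')
          (Or.inr ⟨ha1free (by simp), ha3⟩)) (le_trans (by linarith) hLB)
      · exact absurd hsa2 (hocc _)
      · exact absurd hsa3 (hocc _)
      · exact le_trans (dev_a4 hinj' (Or.inl hsi') (Or.inl ha3))
          (le_trans (by linarith) hLB)
    · refine le_trans (dev_a1 hinj' (Or.inr ⟨l, hsi'⟩)
        (Or.inr ⟨ha1free (by simp), ha3⟩)) (le_trans (by linarith) hLB)
    · exact le_trans (dev_a4 hinj' (Or.inr ⟨l, hsi'⟩) (Or.inl ha3))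
        (le_trans (by linarith) hLB)
    · exact le_trans (dev_orig hinj' hb hsi') (le_trans (by linarith) hLB)
    · exact le_trans (dev_small hinj' hb (Or.inl ⟨e, hsi'⟩)) (le_trans (by linarith) hLB)
    · exact le_trans (dev_small hinj' hb (Or.inr (Or.inl ⟨x, hsi'⟩)))
        (le_trans (by linarith) hLB)
    · exact absurd hsbI (hocc _)
    · exact le_trans (dev_small hinj' hb (Or.inr (Or.inr ⟨l, hsi'⟩)))
        (le_trans (by linarith) hLB)
  · -- deviator is the a₃-player
    have hikk2 : (i : ℕ) = k + 2 := by omega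
    have hieq : i = ⟨k + 2, by omega⟩ := Fin.ext hikk2
    have hLB : (n : ℤ) + 2 ≤ utility (Gp n G) (fun _ => (1 : ℤ)) s i := by
      rw [hieq]
      exact eq_a3 hf
    have hbne : (⟨k, by omega⟩ : Fin (k + 3)) ≠ i := Fin.ne_of_val_ne (show k ≠ (i : ℕ) by omega)
    have ha2ne : (⟨k + 1, by omega⟩ : Fin (k + 3)) ≠ i := Fin.ne_of_val_ne (show k + 1 ≠ (i : ℕ) by omega)
    have hb : ∃ p, p ≠ i ∧ Function.update s i v' p = pB :=
      ⟨⟨k, by omega⟩, hbne, by rw [hupd _ hbne]; exact hsbI⟩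
    have ha2 : ∃ p, p ≠ i ∧ Function.update s i v' p = pA 1 :=
      ⟨⟨k + 1, by omega⟩, ha2ne, by rw [hupd _ ha2ne]; exact hsa2⟩
    have ha2free : (v' ≠ pA 2) → ∀ j, Function.update s i v' j ≠ pA 2 := by
      intro hv' j hj
      by_cases hji : j = i
      · subst hji
        rw [hsi'] at hj
        exact hv' hj
      · rw [hupd _ hji] at hj
        exact hji (Fin.ext (by rw [prof_eq_pA2 hj]; omega))
    rcases v' with (j4 | l | l) | (w | e | x | ⟨⟩ | l)
    · fin_cases j4
      · exact le_trans (dev_a1 hinj' (Or.inl hsi') (Or.inl ha2))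
          (le_trans (by linarith) hLB)
      · exact absurd hsa2 (hocc _)
      · exact absurd hsa3 (hocc _)
      · refine le_trans (dev_a4 hinj' (Or.inl hsi')
          (Or.inr ⟨ha2free (by simp), ha2⟩)) (le_trans (by linarith) hLB)
    · exact le_trans (dev_a1 hinj' (Or.inr ⟨l, hsi'⟩) (Or.inl ha2))
        (le_trans (by linarith) hLB)
    · refine le_trans (dev_a4 hinj' (Or.inr ⟨l, hsi'⟩)
        (Or.inr ⟨ha2free (by simp), ha2⟩)) (le_trans (by linarith) hLB)
    · exact le_trans (dev_orig hinj' hb hsi') (le_trans (by linarith) hLB)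
    · exact le_trans (dev_small hinj' hb (Or.inl ⟨e, hsi'⟩)) (le_trans (by linarith) hLB)
    · exact le_trans (dev_small hinj' hb (Or.inr (Or.inl ⟨x, hsi'⟩)))
        (le_trans (by linarith) hLB)
    · exact absurd hsbI (hocc _)
    · exact le_trans (dev_small hinj' hb (Or.inr (Or.inr ⟨l, hsi'⟩)))
        (le_trans (by linarith) hLB)


/-- if `I` is an independent set of `G` with `|I| ≥ k`, then the
competitive diffusion game with `k+3` players on the unweighted graph `G'` has a
pure Nash equilibrium, namely `k` players on `k` distinct vertices of `I`, one
player on `b`, and two players on `a_2` and `a_3`. -/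
theorem Gp_independent_to_nash (n k : ℕ) (G : SimpleGraph (Fin n))
    [DecidableRel G.Adj] (I : Finset (Fin n))
    (hI : ∀ u ∈ I, ∀ v ∈ I, ¬ G.Adj u v) (hcard : k ≤ I.card) :
    ∃ f : Fin k → Fin n, Function.Injective f ∧ (∀ i, f i ∈ I) ∧
      isNash (Gp n G) (fun _ => (1 : ℤ)) (profGp n G k f) := by
  obtain ⟨f, h1, h2, h3⟩ := Gp_independent_to_nash' n k G I hI hcard
  exact ⟨f, h1, h2, h3⟩
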